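/- Let M be a commutative idempotent monoid acting additively on an abelian group G, F : M → G a function satisfying the chain rule, X_1, …, X_n ∈ M fixed, and F̂ : 2^Σ → G a G-valued measure satisfying the Hu identity for X_1, …, X_n. Then for every subset A ⊆ Σ and every atom p_I ∈ A one has F̂({p_I}) = Σ_{K ⊆ I} (−1)^{|I|−|K|} · (X_{[n]∖K}.F̂(A)) (integer multiples taken in the abelian group G). In particular, if F̂(A) = 0 then F̂({p_I}) = 0 for every atom p_I ∈ A, and consequently F̂(B) = 0 for every B ⊆ A. -/

import Mathlib

namespace AMRF
/-- An additive monoid action of a commutative monoid `M` on an abelian group `G`. -/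
structure MAction (M G : Type*) [CommMonoid M] [AddCommGroup G] where
  act : M → G → G
  act_one : ∀ g, act 1 g = g
  act_mul : ∀ X Y g, act X (act Y g) = act (X * Y) g
  act_add : ∀ X g h, act X (g + h) = act X g + act X h

variable {M G : Type*} [CommMonoid M] [AddCommGroup G]

/-- `F : M → G` satisfies the chain rule `F(XY) = F(X) + X.F(Y)`. -/
def ChainRule (A : MAction M G) (F : M → G) : Prop :=
  ∀ X Y : M, F (X * Y) = F X + A.act X (F Y)

/-- Higher-order terms on a *reversed* argument list: the head of the list is the *last*
argument `Y_q` in `F_q(Y₁; …; Y_q)`. -/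
def Fseq (A : MAction M G) (F : M → G) : List M → G
  | [] => 0
  | [Y] => F Y
  | Y :: Z :: l => Fseq A F (Z :: l) - A.act Y (Fseq A F (Z :: l))

/-- `Fof A F [Y₁, …, Y_q] = F_q(Y₁; …; Y_q)`, defined inductively by
`F_q(Y₁; …; Y_q) = F_{q−1}(Y₁; …; Y_{q−1}) − Y_q.F_{q−1}(Y₁; …; Y_{q−1})`. -/
def Fof (A : MAction M G) (F : M → G) (l : List M) : G :=
  Fseq A F l.reverse

/-- The interaction term `F(;_{i∈I} X_i)`, with arguments in increasing index order. -/
def Fint (A : MAction M G) (F : M → G) {ι : Type*} [LinearOrder ι] (X : ι → M)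
    (I : Finset ι) : G :=
  Fof A F ((I.sort (· ≤ ·)).map X)

/-- The `F`-independence relation: `X ⊥_F Y | Z` iff `Z.F(X; Y) = 0`, where
`F(X; Y) = F(X) − Y.F(X)` is the second-order term. -/
def Findep (A : MAction M G) (F : M → G) (X Y Z : M) : Prop :=
  A.act Z (F X - A.act Y (F X)) = 0
/-- The atoms `p_I`, indexed by nonempty subsets `I ⊆ [n]`. -/
def Atom (n : ℕ) := {I : Finset (Fin n) // I.Nonempty}

/-- `Σ_L = ⋃_{i ∈ L} Σ_i`: the set of atoms `p_I` with `I ∩ L ≠ ∅`. -/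
def circles {n : ℕ} (L : Finset (Fin n)) : Set (Atom n) :=
  {p | ∃ i ∈ L, i ∈ p.1}

/-- A `G`-valued measure on subsets of atoms: additive over disjoint unions. -/
def IsMeasure {G : Type*} [AddCommGroup G] {n : ℕ} (Fhat : Set (Atom n) → G) : Prop :=
  ∀ S T : Set (Atom n), Disjoint S T → Fhat (S ∪ T) = Fhat S + Fhat T

/-- The Hu identity for `Fhat` with respect to `X₁, …, X_n`:
`X_J.F_q(X_{L₁}; …; X_{L_q}) = F̂(⋂ₖ Σ_{Lₖ} ∖ Σ_J)`. -/
def HuIdentity (A : MAction M G) (F : M → G) {n : ℕ} (X : Fin n → M)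
    (Fhat : Set (Atom n) → G) : Prop :=
  ∀ q : ℕ, 1 ≤ q → ∀ (J : Finset (Fin n)) (L : Fin q → Finset (Fin n)),
    A.act (∏ j ∈ J, X j) (Fof A F (List.ofFn fun k => ∏ i ∈ L k, X i)) =
      Fhat ((⋂ k : Fin q, circles (L k)) \ circles J)

/-! ### Auxiliary lemmas -/

instance {n : ℕ} : DecidableEq (Atom n) := fun a b =>
  decidable_of_iff (a.1 = b.1) Subtype.ext_iff.symm

instance {n : ℕ} : Fintype (Atom n) := by unfold Atom; infer_instance

lemma MAction.act_zero (A : MAction M G) (x : M) : A.act x 0 = 0 := by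
  have h := A.act_add x 0 0
  rw [add_zero] at h
  exact (left_eq_add.mp h)

lemma MAction.act_sum (A : MAction M G) (x : M) {ι : Type*} (s : Finset ι) (f : ι → G) :
    A.act x (∑ i ∈ s, f i) = ∑ i ∈ s, A.act x (f i) :=
  map_sum (AddMonoidHom.mk' (A.act x) (A.act_add x)) f s

lemma prod_idem {ι : Type*} (hidem : ∀ x : M, x * x = x) (X : ι → M) (B : Finset ι) :
    (∏ j ∈ B, X j) * (∏ j ∈ B, X j) = ∏ j ∈ B, X j := by
  rw [← Finset.prod_mul_distrib]
  exact Finset.prod_congr rfl fun i _ => hidem _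

lemma prod_union_idem {ι : Type*} [DecidableEq ι] (hidem : ∀ x : M, x * x = x)
    (X : ι → M) (J K : Finset ι) :
    (∏ j ∈ J, X j) * (∏ j ∈ K, X j) = ∏ j ∈ J ∪ K, X j := by
  have hsub : J ∩ K ⊆ J ∪ K := (Finset.inter_subset_left).trans Finset.subset_union_left
  calc (∏ j ∈ J, X j) * (∏ j ∈ K, X j)
      = (∏ j ∈ J ∪ K, X j) * (∏ j ∈ J ∩ K, X j) := (Finset.prod_union_inter).symm
    _ = ((∏ j ∈ (J ∪ K) \ (J ∩ K), X j) * (∏ j ∈ J ∩ K, X j)) * (∏ j ∈ J ∩ K, X j) := by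
        rw [Finset.prod_sdiff hsub]
    _ = (∏ j ∈ (J ∪ K) \ (J ∩ K), X j) * ((∏ j ∈ J ∩ K, X j) * (∏ j ∈ J ∩ K, X j)) := by
        rw [mul_assoc]
    _ = (∏ j ∈ (J ∪ K) \ (J ∩ K), X j) * (∏ j ∈ J ∩ K, X j) := by
        rw [prod_idem hidem]
    _ = ∏ j ∈ J ∪ K, X j := Finset.prod_sdiff hsub

lemma meas_empty {G : Type*} [AddCommGroup G] {n : ℕ} {Fhat : Set (Atom n) → G}
    (hmeas : IsMeasure Fhat) : Fhat ∅ = 0 := by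
  have h := hmeas ∅ ∅ disjoint_bot_left
  rw [Set.union_empty] at h
  exact (left_eq_add.mp h)

lemma meas_sum {G : Type*} [AddCommGroup G] {n : ℕ} {Fhat : Set (Atom n) → G}
    (hmeas : IsMeasure Fhat) (T : Finset (Atom n)) :
    Fhat ↑T = ∑ p ∈ T, Fhat {p} := by
  induction T using Finset.induction_on with
  | empty => simpa using meas_empty hmeas
  | @insert a s ha ih =>
    have hdis : Disjoint ({a} : Set (Atom n)) ↑s :=
      Set.disjoint_singleton_left.mpr (by simpa using ha)
    have : ((insert a s : Finset (Atom n)) : Set (Atom n)) = {a} ∪ ↑s := by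
      rw [Finset.coe_insert, Set.insert_eq]
    rw [this, hmeas _ _ hdis, ih, Finset.sum_insert ha]

lemma neg_one_pow_sub {a b : ℕ} (h : b ≤ a) :
    (-1 : ℤ) ^ (a - b) = (-1) ^ a * (-1) ^ b := by
  obtain ⟨c, rfl⟩ := Nat.exists_eq_add_of_le h
  have hb : (-1 : ℤ) ^ b * (-1) ^ b = 1 := by
    rw [← pow_add, ← two_mul, pow_mul]; norm_num
  rw [Nat.add_sub_cancel_left, pow_add, mul_comm ((-1 : ℤ) ^ b) ((-1 : ℤ) ^ c),
    mul_assoc, hb, mul_one]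

/-- Key consequence of the Hu identity: acting by `X_J` on the measure of a singleton atom
`{p}` gives back `F̂({p})` if `p.1 ∩ J = ∅` and `0` otherwise. -/
lemma act_meas_singleton
    (hidem : ∀ x : M, x * x = x)
    (A : MAction M G) (F : M → G)
    {n : ℕ} (X : Fin n → M)
    (Fhat : Set (Atom n) → G) (hmeas : IsMeasure Fhat) (hHu : HuIdentity A F X Fhat)
    (p : Atom n) (J : Finset (Fin n)) :
    A.act (∏ j ∈ J, X j) (Fhat {p}) = if Disjoint p.1 J then Fhat {p} else 0 := by
  classical
  obtain ⟨I, hI⟩ := p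
  have hq1 : 1 ≤ I.card := Finset.card_pos.mpr hI
  let e : Fin I.card ≃o (I : Finset (Fin n)) := I.orderIsoOfFin rfl
  let L : Fin I.card → Finset (Fin n) := fun k => {(e k : Fin n)}
  have hset : ∀ Jp : Finset (Fin n),
      (⋂ k : Fin I.card, circles (L k)) \ circles (Jp ∪ (Finset.univ \ I)) =
        (if Disjoint I Jp then {(⟨I, hI⟩ : Atom n)} else (∅ : Set (Atom n))) := by
    intro Jp
    have hmem : ∀ r : Atom n,
        (r ∈ (⋂ k : Fin I.card, circles (L k)) \ circles (Jp ∪ (Finset.univ \ I)))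
          ↔ (r = ⟨I, hI⟩ ∧ Disjoint I Jp) := by
      intro r
      constructor
      · rintro ⟨hin, hout⟩
        rw [Set.mem_iInter] at hin
        have hIsub : I ⊆ r.1 := by
          intro i hi
          have h := hin (e.symm ⟨i, hi⟩)
          obtain ⟨j, hj1, hj2⟩ := h
          have hj1' : j = (e (e.symm ⟨i, hi⟩) : Fin n) := Finset.mem_singleton.mp hj1
          have : j = i := by rw [hj1', e.apply_symm_apply]
          rwa [this] at hj2
        have hrest : ∀ i ∈ r.1, i ∉ Jp ∧ i ∈ I := by
          intro i hi
          constructor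
          · intro hiJ
            exact hout ⟨i, Finset.mem_union_left _ hiJ, hi⟩
          · by_contra hiI
            exact hout ⟨i, Finset.mem_union_right _
              (Finset.mem_sdiff.mpr ⟨Finset.mem_univ i, hiI⟩), hi⟩
        have hr1 : r.1 = I :=
          Finset.Subset.antisymm (fun i hi => (hrest i hi).2) hIsub
        refine ⟨Subtype.ext hr1, Finset.disjoint_left.mpr fun i hi => ?_⟩
        exact (hrest i (hIsub hi)).1
      · rintro ⟨rfl, hdis⟩
        constructor
        · apply Set.mem_iInter.mpr
          intro k
          exact ⟨(e k : Fin n), Finset.mem_singleton_self _, (e k).2⟩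
        · rintro ⟨i, hiJ, hiI⟩
          rcases Finset.mem_union.mp hiJ with h | h
          · exact (Finset.disjoint_left.mp hdis hiI) h
          · exact (Finset.mem_sdiff.mp h).2 hiI
    ext r
    by_cases hd : Disjoint I Jp
    · simp only [hd, if_true, Set.mem_singleton_iff, hmem r, and_true]
      exact Iff.rfl
    · simp only [hd, if_false, Set.mem_empty_iff_false, hmem r, and_false]
  set GG := Fof A F (List.ofFn fun k => ∏ i ∈ L k, X i) with hGG
  have h0 := hHu I.card hq1 (∅ ∪ (Finset.univ \ I)) L
  have h1 := hHu I.card hq1 (J ∪ (Finset.univ \ I)) L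
  rw [hset ∅, if_pos (Finset.disjoint_empty_right I), Finset.empty_union] at h0
  rw [hset J] at h1
  rw [← hGG] at h0 h1
  calc A.act (∏ j ∈ J, X j) (Fhat {(⟨I, hI⟩ : Atom n)})
      = A.act (∏ j ∈ J, X j) (A.act (∏ j ∈ Finset.univ \ I, X j) GG) := by rw [h0]
    _ = A.act ((∏ j ∈ J, X j) * (∏ j ∈ Finset.univ \ I, X j)) GG := A.act_mul _ _ _
    _ = A.act (∏ j ∈ J ∪ (Finset.univ \ I), X j) GG := by rw [prod_union_idem hidem]
    _ = Fhat (if Disjoint I J then {(⟨I, hI⟩ : Atom n)} else ∅) := h1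
    _ = if Disjoint (⟨I, hI⟩ : Atom n).1 J then Fhat {(⟨I, hI⟩ : Atom n)} else 0 := by
        by_cases hd : Disjoint I J
        · simp only [hd, if_true]
        · simp only [hd, if_false]; exact meas_empty hmeas

/-- subset determination. If `F̂` is a `G`-valued measure on atoms
satisfying the Hu identity for `X₁, …, X_n`, then for every set `S` of atoms and every atom
`p_I ∈ S`, `F̂({p_I}) = Σ_{K ⊆ I} (−1)^{|I|−|K|} · (X_{[n]∖K}.F̂(S))`.
In particular, if `F̂(S) = 0` then `F̂({p_I}) = 0` for every atom `p_I ∈ S`, and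
consequently `F̂(B) = 0` for every `B ⊆ S`. -/
theorem subset_determination
    {M G : Type*} [CommMonoid M] [AddCommGroup G]
    (hidem : ∀ x : M, x * x = x)
    (A : MAction M G) (F : M → G) (hF : ChainRule A F)
    (n : ℕ) (X : Fin n → M)
    (Fhat : Set (Atom n) → G) (hmeas : IsMeasure Fhat) (hHu : HuIdentity A F X Fhat) :
    (∀ (S : Set (Atom n)) (p : Atom n), p ∈ S →
      Fhat {p} =
        ∑ K ∈ p.1.powerset,
          (-1 : ℤ) ^ (p.1.card - K.card) • A.act (∏ i ∈ Finset.univ \ K, X i) (Fhat S)) ∧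
    (∀ S : Set (Atom n), Fhat S = 0 →
      (∀ p ∈ S, Fhat {p} = 0) ∧ ∀ B ⊆ S, Fhat B = 0) := by
  classical
  have key : ∀ (S : Set (Atom n)) (p : Atom n), p ∈ S →
      Fhat {p} = ∑ K ∈ p.1.powerset,
        (-1 : ℤ) ^ (p.1.card - K.card) • A.act (∏ i ∈ Finset.univ \ K, X i) (Fhat S) := by
    intro S p hp
    have hSfin : S.Finite := Set.toFinite S
    set T := hSfin.toFinset with hT
    have hTS : ↑T = S := hSfin.coe_toFinset
    have hpT : p ∈ T := hSfin.mem_toFinset.mpr hp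
    have hFS : Fhat S = ∑ r ∈ T, Fhat {r} := by
      rw [← hTS]; exact meas_sum hmeas T
    have hterm : ∀ K : Finset (Fin n),
        A.act (∏ i ∈ Finset.univ \ K, X i) (Fhat S)
          = ∑ r ∈ T, if r.1 ⊆ K then Fhat {r} else 0 := by
      intro K
      rw [hFS, MAction.act_sum]
      refine Finset.sum_congr rfl fun r _ => ?_
      rw [act_meas_singleton hidem A F X Fhat hmeas hHu r (Finset.univ \ K)]
      have hiff : Disjoint r.1 (Finset.univ \ K) ↔ r.1 ⊆ K := by
        constructor
        · intro h i hi
          by_contra hiK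
          exact (Finset.disjoint_left.mp h hi)
            (Finset.mem_sdiff.mpr ⟨Finset.mem_univ i, hiK⟩)
        · intro h
          exact Finset.disjoint_left.mpr fun i hi hmem => (Finset.mem_sdiff.mp hmem).2 (h hi)
      by_cases hc : r.1 ⊆ K
      · rw [if_pos (hiff.mpr hc), if_pos hc]
      · rw [if_neg (fun hd => hc (hiff.mp hd)), if_neg hc]
    have crux : ∀ r : Atom n,
        (∑ K ∈ p.1.powerset.filter (fun K => r.1 ⊆ K), (-1 : ℤ) ^ (p.1.card - K.card))
          = if r = p then 1 else 0 := by
      intro r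
      by_cases hrp : r.1 ⊆ p.1
      · have hre : (∑ K ∈ p.1.powerset.filter (fun K => r.1 ⊆ K),
              (-1 : ℤ) ^ (p.1.card - K.card))
            = ∑ K' ∈ (p.1 \ r.1).powerset, (-1 : ℤ) ^ ((p.1 \ r.1).card - K'.card) := by
          refine Finset.sum_nbij' (fun K => K \ r.1) (fun K' => K' ∪ r.1) ?_ ?_ ?_ ?_ ?_
          · intro K hK
            rw [Finset.mem_filter, Finset.mem_powerset] at hK
            exact Finset.mem_powerset.mpr
              (Finset.sdiff_subset_sdiff hK.1 Finset.Subset.rfl)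
          · intro K' hK'
            rw [Finset.mem_powerset] at hK'
            refine Finset.mem_filter.mpr
              ⟨Finset.mem_powerset.mpr ?_, Finset.subset_union_right⟩
            exact Finset.union_subset (hK'.trans Finset.sdiff_subset) hrp
          · intro K hK
            rw [Finset.mem_filter, Finset.mem_powerset] at hK
            exact Finset.sdiff_union_of_subset hK.2
          · intro K' hK'
            rw [Finset.mem_powerset] at hK'
            show (K' ∪ r.1) \ r.1 = K'
            rw [Finset.union_sdiff_right]
            exact Finset.sdiff_eq_self_of_disjoint
              (Finset.disjoint_of_subset_left hK' Finset.sdiff_disjoint)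
          · intro K hK
            rw [Finset.mem_filter, Finset.mem_powerset] at hK
            have h1 : r.1.card ≤ K.card := Finset.card_le_card hK.2
            have h2 : K.card ≤ p.1.card := Finset.card_le_card hK.1
            have h3 : r.1.card ≤ p.1.card := Finset.card_le_card hrp
            congr 1
            rw [Finset.card_sdiff_of_subset hrp, Finset.card_sdiff_of_subset hK.2]
            omega
        rw [hre]
        have hsplit : ∀ K' ∈ (p.1 \ r.1).powerset,
            (-1 : ℤ) ^ ((p.1 \ r.1).card - K'.card)
              = (-1 : ℤ) ^ ((p.1 \ r.1).card) * (-1 : ℤ) ^ K'.card := fun K' hK' =>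
          neg_one_pow_sub (Finset.card_le_card (Finset.mem_powerset.mp hK'))
        rw [Finset.sum_congr rfl hsplit, ← Finset.mul_sum,
          Finset.sum_powerset_neg_one_pow_card]
        by_cases hD : p.1 \ r.1 = ∅
        · have hr : r = p := Subtype.ext
            (Finset.Subset.antisymm hrp (Finset.sdiff_eq_empty_iff_subset.mp hD))
          rw [if_pos hD, if_pos hr, hD]
          simp
        · have hrne : r ≠ p := by
            intro h
            exact hD (by rw [h, Finset.sdiff_self])
          rw [if_neg hD, if_neg hrne, mul_zero]
      · have hfil : p.1.powerset.filter (fun K => r.1 ⊆ K) = ∅ := by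
          rw [Finset.filter_eq_empty_iff]
          intro K hK
          exact fun hrK => hrp (hrK.trans (Finset.mem_powerset.mp hK))
        have hrne : r ≠ p := fun h => hrp (by rw [h])
        rw [hfil, Finset.sum_empty, if_neg hrne]
    symm
    calc ∑ K ∈ p.1.powerset,
          (-1 : ℤ) ^ (p.1.card - K.card) • A.act (∏ i ∈ Finset.univ \ K, X i) (Fhat S)
        = ∑ K ∈ p.1.powerset, ∑ r ∈ T,
            (-1 : ℤ) ^ (p.1.card - K.card) • (if r.1 ⊆ K then Fhat {r} else 0) := by
          refine Finset.sum_congr rfl fun K _ => ?_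
          rw [hterm K, Finset.smul_sum]
      _ = ∑ r ∈ T, ∑ K ∈ p.1.powerset,
            (-1 : ℤ) ^ (p.1.card - K.card) • (if r.1 ⊆ K then Fhat {r} else 0) :=
          Finset.sum_comm
      _ = ∑ r ∈ T, (if r = p then (1 : ℤ) else 0) • Fhat {r} := by
          refine Finset.sum_congr rfl fun r _ => ?_
          rw [← crux r, Finset.sum_smul, Finset.sum_filter]
          refine Finset.sum_congr rfl fun K _ => ?_
          by_cases hc : r.1 ⊆ K
          · rw [if_pos hc, if_pos hc]
          · rw [if_neg hc, if_neg hc, smul_zero]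
      _ = Fhat {p} := by
          have hite : ∀ r ∈ T, (if r = p then (1 : ℤ) else 0) • Fhat {r}
              = if r = p then Fhat {r} else 0 := by
            intro r _
            by_cases h : r = p
            · rw [if_pos h, if_pos h, one_smul]
            · rw [if_neg h, if_neg h, zero_smul]
          rw [Finset.sum_congr rfl hite, Finset.sum_ite_eq' T p, if_pos hpT]
  refine ⟨key, fun S hS0 => ?_⟩
  have hsing : ∀ p ∈ S, Fhat {p} = 0 := by
    intro p hp
    rw [key S p hp, hS0]
    refine Finset.sum_eq_zero fun K _ => ?_
    rw [MAction.act_zero, smul_zero]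
  refine ⟨hsing, fun B hBS => ?_⟩
  have hBfin : B.Finite := Set.toFinite B
  rw [← hBfin.coe_toFinset, meas_sum hmeas]
  exact Finset.sum_eq_zero fun r hr => hsing r (hBS (hBfin.mem_toFinset.mp hr))

end AMRF
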